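/- arXiv:0806.2362 — 4 statements merged into one kernel-verified Lean document; each statement's English description precedes it below -/
import Mathlib

section
/- Fix an integer g ≥ 1 and a point a⃗ = (a_1, …, a_g) ∈ ℂ^g with τ_g(a⃗) := det X_g(a⃗) ≠ 0. Then there exists a vector b⃗ = (b_0, …, b_{g+1}) ∈ ℂ^{g+2} with X_{g+2}(a⃗)·b⃗ = 0 and b_0 ≠ 0. Consequently, there exists a polynomial h ∈ ℂ[t] with deg h ≤ g+1 and h(0) ≠ 0 such that the coefficient of t^n in exp(Σ_{i=1}^g a_i t^{2i−1})·h(t) vanishes for every odd n with n < 2g+1. -/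
/-- `exp` of a formal power series (with zero constant term), defined coefficientwise:
the coefficient of `t^n` in `∑ₘ s^m / m!`.  (For `s` with zero constant term only the
terms with `m ≤ n` contribute.) -/
noncomputable def expPS (s : PowerSeries ℂ) : PowerSeries ℂ :=
  PowerSeries.mk fun n => ∑ m ∈ Finset.range (n + 1),
    ((m.factorial : ℂ))⁻¹ * PowerSeries.coeff n (s ^ m)

/-- The series `∑_{i=1}^g a_i t^{2i-1}` (with `a : Fin g → ℂ`, `a i = a_{i+1}`). -/
noncomputable def genSer (g : ℕ) (a : Fin g → ℂ) : PowerSeries ℂ :=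
  ∑ i : Fin g, PowerSeries.monomial (2 * (i : ℕ) + 1) (a i)

/-- `χ_n(a)` : the coefficient of `t^n` in `exp(∑_{i=1}^g a_i t^{2i-1})`, with `χ_n = 0`
for `n < 0`. -/
noncomputable def chi (g : ℕ) (a : Fin g → ℂ) (n : ℤ) : ℂ :=
  if 0 ≤ n then PowerSeries.coeff n.toNat (expPS (genSer g a)) else 0

/-- The `g × k` matrix `X_k(a)` whose `(i,j)` entry (1-indexed) is `χ_{2i-j}(a)`. -/
noncomputable def Xmat (g : ℕ) (a : Fin g → ℂ) (k : ℕ) : Matrix (Fin g) (Fin k) ℂ :=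
  Matrix.of fun i j => chi g a (2 * ((i : ℕ) : ℤ) + 1 - ((j : ℕ) : ℤ))

/-- `τ_g(a) = det X_g(a)` where `X_g(a)` is the square `g × g` matrix with
`(i,j)` entry `χ_{2i-j}(a)` (1-indexed). -/
noncomputable def tauNum (g : ℕ) (a : Fin g → ℂ) : ℂ :=
  (Matrix.of fun i j : Fin g =>
    chi g a (2 * ((i : ℕ) : ℤ) + 1 - ((j : ℕ) : ℤ))).det

lemma chi_of_neg (g : ℕ) (a : Fin g → ℂ) {z : ℤ} (hz : z < 0) : chi g a z = 0 := by
  simp [chi, not_le.mpr hz]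

lemma chi_zero_eq (g : ℕ) (a : Fin g → ℂ) : chi g a 0 = 1 := by
  simp [chi, expPS]

lemma chi_of_nonneg (g : ℕ) (a : Fin g → ℂ) {z : ℤ} (hz : 0 ≤ z) :
    chi g a z = PowerSeries.coeff z.toNat (expPS (genSer g a)) := by
  simp [chi, hz]

theorem stmt_3 (g : ℕ) (hg : 1 ≤ g) (a : Fin g → ℂ) (hτ : tauNum g a ≠ 0) :
    (∃ b : Fin (g + 2) → ℂ, (Xmat g a (g + 2)).mulVec b = 0 ∧ b 0 ≠ 0) ∧
      (∃ h : Polynomial ℂ, h.degree ≤ ((g + 1 : ℕ) : WithBot ℕ) ∧ h.coeff 0 ≠ 0 ∧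
        ∀ n : ℕ, Odd n → n < 2 * g + 1 →
          PowerSeries.coeff n (expPS (genSer g a) * (h : PowerSeries ℂ)) = 0) := by
  classical
  set Y : Matrix (Fin (g + 1)) (Fin (g + 2)) ℂ :=
    Matrix.of fun i j => chi g a (2 * ((i : ℕ) : ℤ) + 1 - ((j : ℕ) : ℤ)) with hY
  set b : Fin (g + 2) → ℂ :=
    fun j => (-1) ^ (j : ℕ) * (Y.submatrix id j.succAbove).det with hbdef
  -- orthogonality of the signed-minor vector to every row of Y
  have key : ∀ i : Fin (g + 1), ∑ j : Fin (g + 2), Y i j * b j = 0 := by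
    intro i
    set Z : Matrix (Fin (g + 2)) (Fin (g + 2)) ℂ := Matrix.of (Fin.cons (Y i) Y) with hZ
    have hzero : Z.det = 0 := by
      apply Matrix.det_zero_of_row_eq (Fin.succ_ne_zero i).symm
      funext j
      simp [hZ, Fin.cons_succ]
      rfl
    rw [Matrix.det_succ_row_zero] at hzero
    rw [← hzero]
    refine Finset.sum_congr rfl fun j _ => ?_
    have hsub : Z.submatrix Fin.succ j.succAbove = Y.submatrix id j.succAbove := by
      ext k l
      simp [hZ, Matrix.submatrix, Fin.cons_succ]
      rfl
    have hz0 : Z 0 j = Y i j := by simp [hZ]; rfl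
    rw [hsub, hz0, hbdef]
    ring
  -- b 0 = τ_g
  have hb0 : b 0 = tauNum g a := by
    have hA : (Y.submatrix id (Fin.succAbove 0)).det = tauNum g a := by
      rw [Matrix.det_succ_row_zero]
      rw [Finset.sum_eq_single 0]
      · have h00 : (Y.submatrix id (Fin.succAbove 0)) 0 0 = 1 := by
          have : (2 * (((0 : Fin (g+1)) : ℕ) : ℤ) + 1
              - ((((Fin.succAbove 0) (0 : Fin (g+1))) : ℕ) : ℤ)) = 0 := by
            simp [Fin.zero_succAbove]
          simp only [Matrix.submatrix_apply, id_eq, hY, Matrix.of_apply]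
          rw [this, chi_zero_eq]
        rw [h00]
        have heq : (Y.submatrix id (Fin.succAbove 0)).submatrix Fin.succ
            (Fin.succAbove 0) = Matrix.of fun i j : Fin g =>
            chi g a (2 * ((i : ℕ) : ℤ) + 1 - ((j : ℕ) : ℤ)) := by
          ext k l
          simp only [Matrix.submatrix_apply, id_eq, hY, Matrix.of_apply,
            Fin.zero_succAbove, Fin.val_succ]
          congr 1
          push_cast
          ring
        rw [heq]
        simp [tauNum]
      · intro j _ hj
        have hjv : 1 ≤ (j : ℕ) := Nat.one_le_iff_ne_zero.mpr (fun h => hj (Fin.ext h))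
        have h0j : (Y.submatrix id (Fin.succAbove 0)) 0 j = 0 := by
          simp only [Matrix.submatrix_apply, id_eq, hY, Matrix.of_apply,
            Fin.zero_succAbove, Fin.val_succ, Fin.val_zero]
          apply chi_of_neg
          push_cast
          omega
        rw [h0j]
        ring
      · intro h
        exact absurd (Finset.mem_univ 0) h
    rw [hbdef]
    simpa using hA
  have hb0ne : b 0 ≠ 0 := by rw [hb0]; exact hτ
  -- part 1
  have hmulvec : (Xmat g a (g + 2)).mulVec b = 0 := by
    funext i
    have hk := key ⟨(i : ℕ), by omega⟩
    simpa [Matrix.mulVec, dotProduct, Xmat, hY] using hk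
  refine ⟨⟨b, hmulvec, hb0ne⟩, ?_⟩
  -- part 2 : the polynomial
  set bb : ℕ → ℂ := fun q => if hq : q < g + 2 then b ⟨q, hq⟩ else 0 with hbb
  set h : Polynomial ℂ :=
    ∑ q ∈ Finset.range (g + 2), Polynomial.C (bb q) * Polynomial.X ^ q with hh
  have hcoeff : ∀ k, h.coeff k = bb k := by
    intro k
    rw [hh, Polynomial.finset_sum_coeff]
    simp only [Polynomial.coeff_C_mul, Polynomial.coeff_X_pow, mul_ite, mul_one, mul_zero]
    rw [Finset.sum_ite_eq (Finset.range (g + 2)) k bb]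
    by_cases hk : k < g + 2
    · simp [Finset.mem_range.mpr hk]
    · simp [hbb, hk, Finset.mem_range]
  have hdeg : h.degree ≤ ((g + 1 : ℕ) : WithBot ℕ) := by
    rw [hh]
    refine (Polynomial.degree_sum_le _ _).trans ?_
    rw [Finset.sup_le_iff]
    intro q hq
    refine (Polynomial.degree_C_mul_X_pow_le _ _).trans ?_
    exact_mod_cast Nat.cast_le.mpr (by simpa using Nat.lt_succ_iff.mp (by
      simpa [Nat.lt_succ_iff] using Finset.mem_range.mp hq))
  refine ⟨h, hdeg, ?_, ?_⟩
  · rw [hcoeff 0, hbb]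
    simpa using hb0ne
  · intro n hodd hlt
    obtain ⟨k, hk⟩ := hodd
    have hkg : k < g + 1 := by omega
    rw [PowerSeries.coeff_mul, Finset.Nat.sum_antidiagonal_eq_sum_range_succ_mk]
    -- reindex q ↦ n - q
    have hreflect :
        ∑ p ∈ Finset.range (n + 1),
            (PowerSeries.coeff p) (expPS (genSer g a)) * PowerSeries.coeff (n - p) h =
          ∑ q ∈ Finset.range (n + 1),
            chi g a ((n : ℤ) - (q : ℤ)) * bb q := by
      rw [← Finset.sum_range_reflect]
      refine Finset.sum_congr rfl fun q hq => ?_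
      have hq' : q ≤ n := Nat.lt_succ_iff.mp (Finset.mem_range.mp hq)
      have h1 : n + 1 - 1 - q = n - q := by omega
      have h2 : n - (n - q) = q := by omega
      rw [h1, h2]
      have h3 : chi g a ((n : ℤ) - (q : ℤ)) =
          (PowerSeries.coeff (n - q)) (expPS (genSer g a)) := by
        have h4 : ((n : ℤ) - (q : ℤ)).toNat = n - q := by omega
        rw [chi_of_nonneg g a (by omega), h4]
      rw [h3, Polynomial.coeff_coe, hcoeff]
    rw [hreflect]
    -- change the summation range to range (g+2)
    have hrange :
        ∑ q ∈ Finset.range (n + 1), chi g a ((n : ℤ) - (q : ℤ)) * bb q =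
          ∑ q ∈ Finset.range (g + 2), chi g a ((n : ℤ) - (q : ℤ)) * bb q := by
      have hzero1 : ∀ q ∈ Finset.range (n + g + 3), q ∉ Finset.range (n + 1) →
          chi g a ((n : ℤ) - (q : ℤ)) * bb q = 0 := by
        intro q _ hq
        have : n + 1 ≤ q := by simpa [Nat.lt_succ_iff] using Finset.mem_range.not.mp hq
        rw [chi_of_neg g a (by push_cast; omega), zero_mul]
      have hzero2 : ∀ q ∈ Finset.range (n + g + 3), q ∉ Finset.range (g + 2) →
          chi g a ((n : ℤ) - (q : ℤ)) * bb q = 0 := by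
        intro q _ hq
        have hq' : ¬ q < g + 2 := by simpa using Finset.mem_range.not.mp hq
        rw [hbb]
        simp [dif_neg hq']
      rw [Finset.sum_subset (Finset.range_subset_range.mpr (by omega)) hzero1,
        Finset.sum_subset (Finset.range_subset_range.mpr (by omega)) hzero2]
    rw [hrange]
    -- identify with the key orthogonality relation
    have := key ⟨k, hkg⟩
    rw [← this, ← Fin.sum_univ_eq_sum_range (fun q => chi g a ((n : ℤ) - (q : ℤ)) * bb q)]
    refine Finset.sum_congr rfl fun j _ => ?_
    have hbj : bb (j : ℕ) = b j := by
      rw [hbb]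
      simp [j.isLt]
    have hchi : chi g a ((n : ℤ) - ((j : ℕ) : ℤ)) = Y (⟨k, hkg⟩ : Fin (g + 1)) j := by
      rw [hY]
      simp only [Matrix.of_apply]
      congr 1
      push_cast [hk]
      ring
    rw [hbj, hchi, mul_comm]
end

section
/- Fix an integer g ≥ 1. The formal power series Ξ_g(t) := (1 − t)·exp(Σ_{j=1}^{g} t^{2j−1}/(2j−1)) ∈ ℂ[[t]] has vanishing coefficient of t^n for every odd n with n < 2g+1 (i.e., for n = 1, 3, …, 2g−1). -/
/-- The polynomial `∑_{j=1}^g t^{2j-1}/(2j-1)`, as a power series. -/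
noncomputable def oddLogSerTrunc (g : ℕ) : PowerSeries ℂ :=
  ∑ j : Fin g, PowerSeries.monomial (2 * (j : ℕ) + 1) ((2 * (j : ℕ) + 1 : ℂ))⁻¹

open PowerSeries

namespace StmtAux

lemma coeff_pow_eq_zero {s : PowerSeries ℂ} (hs : constantCoeff s = 0)
    {n m : ℕ} (h : n < m) : coeff n (s ^ m) = 0 := by
  have hX : (X : PowerSeries ℂ) ∣ s := X_dvd_iff.mpr hs
  exact X_pow_dvd_iff.mp (pow_dvd_pow_of_dvd hX m) n h

lemma coeff_expPS {s : PowerSeries ℂ} (hs : constantCoeff s = 0)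
    (n N : ℕ) (hN : n < N) :
    coeff n (expPS s) = ∑ m ∈ Finset.range N,
      ((m.factorial : ℂ))⁻¹ * coeff n (s ^ m) := by
  rw [expPS, coeff_mk]
  apply Finset.sum_subset
  · exact Finset.range_subset_range.mpr hN
  · intro m _ hm
    rw [coeff_pow_eq_zero hs (by simpa using hm), mul_zero]

lemma derivative_expPS {s : PowerSeries ℂ} (hs : constantCoeff s = 0) :
    d⁄dX ℂ (expPS s) = (d⁄dX ℂ s) * expPS s := by
  ext n
  rw [coeff_derivative, coeff_expPS hs (n + 1) (n + 2) (by omega), coeff_mul]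
  have hE : ∀ j ∈ Finset.HasAntidiagonal.antidiagonal n, ∀ p : ℂ,
      p * coeff j.2 (expPS s) = ∑ k ∈ Finset.range (n + 1),
        ((k.factorial : ℂ))⁻¹ * (p * coeff j.2 (s ^ k)) := by
    intro j hj p
    rw [coeff_expPS hs j.2 (n + 1)
      (by have := Finset.HasAntidiagonal.mem_antidiagonal.mp hj; omega), Finset.mul_sum]
    exact Finset.sum_congr rfl fun k _ => by ring
  calc (∑ m ∈ Finset.range (n + 2), ((m.factorial : ℂ))⁻¹ * coeff (n + 1) (s ^ m))
        * (n + 1 : ℂ)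
      = ∑ m ∈ Finset.range (n + 2),
          ((m.factorial : ℂ))⁻¹ * (coeff (n + 1) (s ^ m) * (n + 1 : ℂ)) := by
        rw [Finset.sum_mul]; exact Finset.sum_congr rfl fun m _ => by ring
    _ = ∑ m ∈ Finset.range (n + 2),
          ((m.factorial : ℂ))⁻¹ * (m * coeff n (s ^ (m - 1) * d⁄dX ℂ s)) := by
        refine Finset.sum_congr rfl fun m _ => ?_
        congr 1
        have h3 : coeff n (d⁄dX ℂ (s ^ m)) = (m : ℂ) * coeff n (s ^ (m - 1) * d⁄dX ℂ s) := by
          rw [Derivation.leibniz_pow, smul_eq_mul, map_nsmul, nsmul_eq_mul]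
        rw [← coeff_derivative, h3]
    _ = ∑ k ∈ Finset.range (n + 1),
          ((k.factorial : ℂ))⁻¹ * coeff n (s ^ k * d⁄dX ℂ s) := by
        rw [Finset.sum_range_succ']
        simp only [Nat.cast_zero, zero_mul, mul_zero, add_zero]
        refine Finset.sum_congr rfl fun k _ => ?_
        simp only [Nat.add_sub_cancel]
        have h1 : ((k : ℂ) + 1) ≠ 0 := Nat.cast_add_one_ne_zero k
        have h2 : ((Nat.factorial k : ℂ)) ≠ 0 :=
          Nat.cast_ne_zero.mpr (Nat.factorial_ne_zero k)
        rw [Nat.factorial_succ, Nat.cast_mul]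
        push_cast
        field_simp
    _ = ∑ k ∈ Finset.range (n + 1), ((k.factorial : ℂ))⁻¹ *
          ∑ j ∈ Finset.HasAntidiagonal.antidiagonal n, coeff j.1 (d⁄dX ℂ s) * coeff j.2 (s ^ k) := by
        refine Finset.sum_congr rfl fun k _ => ?_
        rw [mul_comm (s ^ k), coeff_mul]
    _ = ∑ j ∈ Finset.HasAntidiagonal.antidiagonal n, coeff j.1 (d⁄dX ℂ s) * coeff j.2 (expPS s) := by
        simp only [Finset.mul_sum]
        rw [Finset.sum_comm]
        refine Finset.sum_congr rfl fun j hj => ?_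
        rw [hE j hj (coeff j.1 (d⁄dX ℂ s))]

lemma derivative_monomial (m : ℕ) (a : ℂ) :
    d⁄dX ℂ ((monomial (m + 1)) a) = (monomial m) ((m + 1 : ℂ) * a) := by
  ext n
  rw [coeff_derivative, coeff_monomial, coeff_monomial]
  by_cases h : n = m
  · subst h; simp [mul_comm]
  · rw [if_neg (by omega), if_neg h, zero_mul]

lemma derivative_oddLogSerTrunc (g : ℕ) :
    d⁄dX ℂ (oddLogSerTrunc g) = ∑ j : Fin g, (X : PowerSeries ℂ) ^ (2 * (j : ℕ)) := by
  rw [oddLogSerTrunc, map_sum]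
  refine Finset.sum_congr rfl fun j _ => ?_
  rw [derivative_monomial, X_pow_eq]
  congr 1
  have h : ((2 * (j : ℕ) + 1 : ℕ) : ℂ) ≠ 0 :=
    Nat.cast_ne_zero.mpr (Nat.succ_ne_zero _)
  push_cast at h ⊢
  field_simp

lemma telescope (g : ℕ) :
    (1 - X ^ 2) * ∑ j : Fin g, (X : PowerSeries ℂ) ^ (2 * (j : ℕ))
      = 1 - X ^ (2 * g) := by
  rw [Fin.sum_univ_eq_sum_range (fun j => (X : PowerSeries ℂ) ^ (2 * j)), Finset.mul_sum]
  have : ∀ j ∈ Finset.range g, (1 - (X : PowerSeries ℂ) ^ 2) * X ^ (2 * j)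
      = X ^ (2 * j) - X ^ (2 * (j + 1)) := by
    intro j _
    ring
  rw [Finset.sum_congr rfl this, Finset.sum_range_sub' (fun j => (X : PowerSeries ℂ) ^ (2 * j))]
  norm_num

lemma coeff_X_pow_mul_zero {φ : PowerSeries ℂ} {n d : ℕ} (h : d < n) :
    coeff d ((X : PowerSeries ℂ) ^ n * φ) = 0 := by
  rw [coeff_X_pow_mul', if_neg (by omega)]

end StmtAux

theorem stmt_5 (g : ℕ) (hg : 1 ≤ g) :
    ∀ n : ℕ, Odd n → n < 2 * g + 1 →
      PowerSeries.coeff n ((1 - PowerSeries.X) * expPS (oddLogSerTrunc g)) = 0 := by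
  set S := oddLogSerTrunc g with hS
  have hS0 : constantCoeff S = 0 := by
    rw [hS, oddLogSerTrunc, map_sum]
    refine Finset.sum_eq_zero fun j _ => ?_
    rw [← coeff_zero_eq_constantCoeff_apply, coeff_monomial, if_neg (by omega)]
  set E := expPS S with hE
  set F := (1 - (X : PowerSeries ℂ)) * E with hF
  have hA : d⁄dX ℂ E = (d⁄dX ℂ S) * E := StmtAux.derivative_expPS hS0
  have hB : (1 - (X : PowerSeries ℂ) ^ 2) * d⁄dX ℂ S = 1 - X ^ (2 * g) := by
    rw [hS, StmtAux.derivative_oddLogSerTrunc, StmtAux.telescope]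
  have hDF : d⁄dX ℂ F = (1 - X) * ((d⁄dX ℂ S) * E) - E := by
    rw [hF, Derivation.leibniz]
    have : d⁄dX ℂ (1 - (X : PowerSeries ℂ)) = -1 := by
      rw [map_sub, derivative_X]; simp
    rw [this, hA]
    simp only [smul_eq_mul]
    ring
  have key : d⁄dX ℂ F - X ^ 2 * d⁄dX ℂ F
      = -(X * F) - X ^ (2 * g) * F := by
    have : (1 - (X : PowerSeries ℂ) ^ 2) * d⁄dX ℂ F = -((X + X ^ (2 * g)) * F) := by
      rw [hDF, hF]
      linear_combination ((1 - (X : PowerSeries ℂ)) * E) * hB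
    linear_combination this
  -- main induction: odd coefficients vanish
  have main : ∀ k : ℕ, k < g → coeff (2 * k + 1) F = 0 := by
    intro k
    induction k with
    | zero =>
      intro _
      have h0 := congrArg (coeff 0) key
      simp only [map_sub, map_neg] at h0
      rw [coeff_derivative, StmtAux.coeff_X_pow_mul_zero (by omega),
        StmtAux.coeff_X_pow_mul_zero (φ := F) (n := 2 * g) (d := 0) (by omega)] at h0
      have hx : coeff 0 ((X : PowerSeries ℂ) * F) = 0 := by
        rw [← pow_one (X : PowerSeries ℂ)]
        exact StmtAux.coeff_X_pow_mul_zero (by omega)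
      rw [hx] at h0
      simpa using h0
    | succ k ih =>
      intro hk
      have hkg : k < g := by omega
      have hIH := ih hkg
      have h0 := congrArg (coeff (2 * k + 2)) key
      simp only [map_sub, map_neg] at h0
      have h1 : coeff (2 * k + 2) (d⁄dX ℂ F) = coeff (2 * k + 3) F * (2 * k + 3 : ℂ) := by
        rw [coeff_derivative]; push_cast; ring_nf
      have h2 : coeff (2 * k + 2) ((X : PowerSeries ℂ) ^ 2 * d⁄dX ℂ F) = 0 := by
        rw [coeff_X_pow_mul', if_pos (by omega)]
        have : 2 * k + 2 - 2 = 2 * k := by omega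
        rw [this, coeff_derivative, hIH, zero_mul]
      have h3 : coeff (2 * k + 2) ((X : PowerSeries ℂ) * F) = 0 := by
        rw [← pow_one (X : PowerSeries ℂ), coeff_X_pow_mul', if_pos (by omega)]
        have : 2 * k + 2 - 1 = 2 * k + 1 := by omega
        rw [this, hIH]
      have h4 : coeff (2 * k + 2) ((X : PowerSeries ℂ) ^ (2 * g) * F) = 0 :=
        StmtAux.coeff_X_pow_mul_zero (by omega)
      rw [h1, h2, h3, h4] at h0
      have h5 : coeff (2 * k + 3) F * (2 * k + 3 : ℂ) = 0 := by
        linear_combination h0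
      have h6 : ((2 * k + 3 : ℂ)) ≠ 0 := by
        have : ((2 * k + 3 : ℕ) : ℂ) ≠ 0 := Nat.cast_ne_zero.mpr (by omega)
        push_cast at this
        convert this using 2
      rcases mul_eq_zero.mp h5 with h | h
      · exact h
      · exact absurd h h6
  intro n hodd hlt
  obtain ⟨k, hk⟩ := hodd
  subst hk
  exact main k (by omega)
end

section
/- Fix an integer g ≥ 1 and nonzero complex numbers α_1, …, α_g. Define a⃗ = (a_1, …, a_g) ∈ ℂ^g by a_i := (1/(2i−1))·Σ_{k=1}^{g} α_k^{−(2i−1)}. Then the formal power series ∏_{k=1}^{g}(1 − α_k^{−1} t) · exp(Σ_{i=1}^{g} a_i t^{2i−1}) ∈ ℂ[[t]] has vanishing coefficient of t^n for every odd n with n < 2g+1. -/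
open PowerSeries Finset

noncomputable def geomPS (c : ℂ) : PowerSeries ℂ := PowerSeries.mk fun n => c ^ n

lemma one_sub_mul_geomPS (c : ℂ) : (1 - PowerSeries.C c * X) * geomPS c = 1 := by
  ext n
  rw [sub_mul, one_mul, mul_assoc, map_sub]
  cases n with
  | zero => simp [geomPS, coeff_zero_eq_constantCoeff]
  | succ n =>
    rw [coeff_C_mul, coeff_succ_X_mul]
    simp [geomPS, pow_succ, mul_comm]

lemma coeff_pow_eq_zero' {s : PowerSeries ℂ} (hs : PowerSeries.constantCoeff s = 0)
    {n m : ℕ} (h : n < m) : PowerSeries.coeff n (s ^ m) = 0 := by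
  have hd : (X : PowerSeries ℂ) ^ m ∣ s ^ m := pow_dvd_pow_of_dvd (X_dvd_iff.mpr hs) m
  exact (X_pow_dvd_iff.mp hd) n h

lemma derivativeFun_pow (s : PowerSeries ℂ) (m : ℕ) :
    d⁄dX ℂ (s ^ (m + 1)) = ((m : ℂ) + 1) • (s ^ m * d⁄dX ℂ s) := by
  induction m with
  | zero => simp
  | succ m ih =>
    rw [pow_succ, Derivation.leibniz, ih, smul_eq_mul, smul_eq_mul,
      PowerSeries.smul_eq_C_mul, PowerSeries.smul_eq_C_mul]
    push_cast
    simp only [map_add, map_one]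
    ring



lemma derivative_expPS {s : PowerSeries ℂ} (hs : PowerSeries.constantCoeff s = 0) :
    d⁄dX ℂ (expPS s) = d⁄dX ℂ s * expPS s := by
  ext n
  rw [coeff_derivative]
  have hL : (PowerSeries.coeff (n+1)) (expPS s) * ((n:ℂ)+1)
      = ∑ m ∈ range (n+1), ((m.factorial : ℂ))⁻¹
          * PowerSeries.coeff n (s ^ m * d⁄dX ℂ s) := by
    rw [expPS, coeff_mk, sum_mul, Finset.sum_range_succ']
    have h0 : ((Nat.factorial 0 : ℂ))⁻¹ * (PowerSeries.coeff (n+1)) (s ^ 0) * ((n:ℂ)+1) = 0 := by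
      simp
    rw [h0, add_zero]
    refine Finset.sum_congr rfl fun m _ => ?_
    have hder : (PowerSeries.coeff (n+1)) (s ^ (m+1)) * ((n:ℂ)+1)
        = PowerSeries.coeff n (d⁄dX ℂ (s ^ (m+1))) := by
      rw [coeff_derivative]
    rw [mul_assoc, hder, derivativeFun_pow, map_smul, smul_eq_mul, Nat.factorial_succ]
    have hm : ((m:ℂ)+1) ≠ 0 := by exact_mod_cast (Nat.cast_ne_zero (R := ℂ)).mpr (Nat.succ_ne_zero m)
    have hf : ((m.factorial : ℂ)) ≠ 0 := Nat.cast_ne_zero.mpr m.factorial_ne_zero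
    push_cast
    field_simp
  rw [hL, PowerSeries.coeff_mul]
  have hR : ∀ p ∈ antidiagonal n,
      (PowerSeries.coeff p.1) (d⁄dX ℂ s) * (PowerSeries.coeff p.2) (expPS s)
      = ∑ m ∈ range (n+1), ((m.factorial : ℂ))⁻¹
          * ((PowerSeries.coeff p.1) (d⁄dX ℂ s) * (PowerSeries.coeff p.2) (s ^ m)) := by
    intro p hp
    have hple : p.2 ≤ n := Finset.HasAntidiagonal.antidiagonal.snd_le hp
    rw [expPS, coeff_mk, Finset.mul_sum]
    have hsub : range (p.2 + 1) ⊆ range (n + 1) := Finset.range_subset_range.mpr (by omega)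
    rw [Finset.sum_subset hsub (fun m _ hnm => by
      simp only [Finset.mem_range, not_lt] at hnm
      rw [coeff_pow_eq_zero' hs (by omega : p.2 < m)]
      ring)]
    exact Finset.sum_congr rfl fun m _ => by ring
  rw [Finset.sum_congr rfl hR, Finset.sum_comm]
  refine Finset.sum_congr rfl fun m _ => ?_
  rw [← Finset.mul_sum, ← PowerSeries.coeff_mul, mul_comm (s^m)]

lemma derivative_monomial (k : ℕ) (c : ℂ) :
    d⁄dX ℂ (PowerSeries.monomial (k+1) c) = PowerSeries.monomial k (((k:ℂ)+1) * c) := by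
  ext n
  rw [coeff_derivative, PowerSeries.coeff_monomial, PowerSeries.coeff_monomial]
  by_cases h : n = k
  · subst h; simp [mul_comm]
  · rw [if_neg h, if_neg (by omega)]
    simp

lemma constantCoeff_genSer (g : ℕ) (a : Fin g → ℂ) :
    PowerSeries.constantCoeff (genSer g a) = 0 := by
  rw [genSer, map_sum]
  refine Finset.sum_eq_zero fun i _ => ?_
  rw [← PowerSeries.coeff_zero_eq_constantCoeff_apply, PowerSeries.coeff_monomial]
  simp

lemma derivative_genSer (g : ℕ) (a : Fin g → ℂ) :
    d⁄dX ℂ (genSer g a)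
      = ∑ i : Fin g, PowerSeries.monomial (2 * (i:ℕ)) ((2 * (i:ℕ) + 1 : ℂ) * a i) := by
  rw [genSer, map_sum]
  refine Finset.sum_congr rfl fun i _ => ?_
  rw [derivative_monomial]
  push_cast
  ring_nf

lemma prod_mul_prod_geom {g : ℕ} (c : Fin g → ℂ) (S : Finset (Fin g)) :
    (∏ k ∈ S, (1 - PowerSeries.C (c k) * X)) * (∏ k ∈ S, geomPS (c k)) = 1 := by
  rw [← Finset.prod_mul_distrib]
  exact Finset.prod_eq_one fun k _ => one_sub_mul_geomPS (c k)

lemma derivative_one_sub (c : ℂ) :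
    d⁄dX ℂ (1 - PowerSeries.C c * X) = -(PowerSeries.C c) := by
  rw [map_sub, Derivation.leibniz, derivative_X, derivative_C, Derivation.map_one_eq_zero]
  simp

lemma logderiv_prod {g : ℕ} (c : Fin g → ℂ) (S : Finset (Fin g)) :
    d⁄dX ℂ (∏ k ∈ S, (1 - PowerSeries.C (c k) * X)) * (∏ k ∈ S, geomPS (c k))
      = ∑ k ∈ S, (-(PowerSeries.C (c k)) * geomPS (c k)) := by
  induction S using Finset.induction with
  | empty => simp
  | @insert b S hb ih =>
    rw [Finset.prod_insert hb, Finset.prod_insert hb, Finset.sum_insert hb, Derivation.leibniz,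
      smul_eq_mul, smul_eq_mul, derivative_one_sub]
    have h1 := one_sub_mul_geomPS (c b)
    have h2 := prod_mul_prod_geom c S
    calc ((1 - PowerSeries.C (c b) * X) * d⁄dX ℂ (∏ k ∈ S, (1 - PowerSeries.C (c k) * X))
            + (∏ k ∈ S, (1 - PowerSeries.C (c k) * X)) * (-(PowerSeries.C (c b))))
          * (geomPS (c b) * ∏ k ∈ S, geomPS (c k))
        = ((1 - PowerSeries.C (c b) * X) * geomPS (c b))
            * (d⁄dX ℂ (∏ k ∈ S, (1 - PowerSeries.C (c k) * X)) * ∏ k ∈ S, geomPS (c k))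
          + ((∏ k ∈ S, (1 - PowerSeries.C (c k) * X)) * ∏ k ∈ S, geomPS (c k))
            * (-(PowerSeries.C (c b)) * geomPS (c b)) := by ring
      _ = -(PowerSeries.C (c b)) * geomPS (c b)
            + ∑ k ∈ S, (-(PowerSeries.C (c k)) * geomPS (c k)) := by
          rw [h1, h2, ih, one_mul, one_mul]
          ring

theorem stmt_6 (g : ℕ) (hg : 1 ≤ g) (α : Fin g → ℂ) (hα : ∀ k, α k ≠ 0)
    (a : Fin g → ℂ)
    (ha : ∀ i : Fin g,
      a i = ((2 * (i : ℕ) + 1 : ℂ))⁻¹ * ∑ k : Fin g, (α k) ^ (-(2 * ((i : ℕ) : ℤ) + 1))) :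
    ∀ n : ℕ, Odd n → n < 2 * g + 1 →
      PowerSeries.coeff n
        ((∏ k : Fin g, (1 - PowerSeries.C (α k)⁻¹ * PowerSeries.X)) *
          expPS (genSer g a)) = 0 := by
  set s : PowerSeries ℂ := genSer g a with hsdef
  set P : PowerSeries ℂ := ∏ k : Fin g, (1 - PowerSeries.C (α k)⁻¹ * X) with hPdef
  set E : PowerSeries ℂ := expPS s with hEdef
  set Pinv : PowerSeries ℂ := ∏ k : Fin g, geomPS (α k)⁻¹ with hPinvdef
  set D : PowerSeries ℂ :=
    (∑ k : Fin g, (-(PowerSeries.C (α k)⁻¹) * geomPS (α k)⁻¹)) + d⁄dX ℂ s with hD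
  have hPPinv : P * Pinv = 1 := prod_mul_prod_geom _ Finset.univ
  have hlog : d⁄dX ℂ P * Pinv
      = ∑ k : Fin g, (-(PowerSeries.C (α k)⁻¹) * geomPS (α k)⁻¹) :=
    logderiv_prod _ Finset.univ
  have hderG : d⁄dX ℂ (P * E) = (P * E) * D := by
    rw [Derivation.leibniz, smul_eq_mul, smul_eq_mul, hEdef,
      derivative_expPS (constantCoeff_genSer g a), ← hEdef, hD, ← hlog]
    linear_combination (-(E * d⁄dX ℂ P)) * hPPinv
  have hDeven : ∀ j : ℕ, j < g → PowerSeries.coeff (2 * j) D = 0 := by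
    intro j hj
    have hkey : ∀ k : Fin g, (α k) ^ (-(2 * (j : ℤ) + 1))
        = (α k)⁻¹ * ((α k)⁻¹) ^ (2 * j) := by
      intro k
      rw [show (-(2 * (j : ℤ) + 1)) = -((2 * j + 1 : ℕ) : ℤ) by push_cast; ring,
        zpow_neg, zpow_natCast, ← inv_pow, pow_succ']
    rw [hD, map_add, map_sum, hsdef, derivative_genSer g a, map_sum]
    have h2 : ∑ i : Fin g,
        (PowerSeries.coeff (2 * j))
          (PowerSeries.monomial (2 * (i : ℕ)) ((2 * (i : ℕ) + 1 : ℂ) * a i))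
        = (2 * (j : ℕ) + 1 : ℂ) * a ⟨j, hj⟩ := by
      rw [Finset.sum_eq_single (⟨j, hj⟩ : Fin g)]
      · rw [PowerSeries.coeff_monomial, if_pos rfl]
      · intro i _ hne
        rw [PowerSeries.coeff_monomial, if_neg]
        intro hcontra
        exact hne (Fin.ext (show (i:ℕ) = j by omega))
      · intro h; exact absurd (Finset.mem_univ _) h
    rw [h2, ha ⟨j, hj⟩]
    have hc1 : (2 * (j : ℕ) + 1 : ℂ) ≠ 0 := by
      intro h; norm_cast at h
    rw [← mul_assoc, mul_inv_cancel₀ hc1, one_mul]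
    simp only [neg_mul, map_neg, PowerSeries.coeff_C_mul, geomPS, PowerSeries.coeff_mk]
    simp only [hkey]
    rw [← Finset.sum_add_distrib]
    exact Finset.sum_eq_zero fun k _ => by ring
  have H : ∀ n : ℕ, Odd n → n < 2 * g + 1 → PowerSeries.coeff n (P * E) = 0 := by
    intro n
    induction n using Nat.strong_induction_on with
    | _ n ih =>
      intro hodd hlt
      obtain ⟨u, rfl⟩ := hodd
      have hz : PowerSeries.coeff (2 * u) ((P * E) * D) = 0 := by
        rw [PowerSeries.coeff_mul]
        refine Finset.sum_eq_zero fun p hp => ?_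
        have hpm : p.1 + p.2 = 2 * u := Finset.HasAntidiagonal.mem_antidiagonal.mp hp
        rcases Nat.even_or_odd p.2 with he | ho
        · obtain ⟨j, hjj⟩ := he
          rw [show p.2 = 2 * j by omega, hDeven j (by omega), mul_zero]
        · obtain ⟨t, ht⟩ := ho
          have h1 : Odd p.1 := ⟨u - t - 1, by omega⟩
          rw [ih p.1 (by omega) h1 (by omega), zero_mul]
      have hz2 : PowerSeries.coeff (2 * u + 1) (P * E) * ((2 * u : ℕ) + 1 : ℂ) = 0 := by
        rw [← coeff_derivative, hderG, hz]
      have hne : ((2 * u : ℕ) + 1 : ℂ) ≠ 0 := by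
        intro h; norm_cast at h
      exact (mul_eq_zero.mp hz2).resolve_right hne
  exact H
end

section
/- Fix an integer g ≥ 2 and let R := ℂ[X_0, …, X_{2g−1}], with the convention X_m := 0 in R for m < 0. Define g × g matrices Q_1, Q_2 over R by: Q_1(1,j) := X_{g−2j} and Q_1(i,j) := X_{g+i+1−2j} for 2 ≤ i ≤ g; Q_2(1,j) := X_{g+1−2j}, Q_2(2,j) := X_{g+2−2j}, and Q_2(i,j) := X_{g+i+1−2j} for 3 ≤ i ≤ g (in all cases 1 ≤ j ≤ g). Then det Q_1 = det Q_2 in R. -/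
/-- The variable `X_m` of `ℂ[X_0, …, X_{2g-1}]`, with convention `X_m = 0` for `m < 0`
(all the indices appearing below lie in `(-∞, 2g-1]`). -/
noncomputable def Xvar (g : ℕ) (m : ℤ) : MvPolynomial (Fin (2 * g)) ℂ :=
  if h : 0 ≤ m ∧ m < 2 * (g : ℤ) then MvPolynomial.X ⟨m.toNat, by omega⟩ else 0

/-- The matrix `Q_1`: first row `X_{g-2j}`, and `(i,j)` entry `X_{g+i+1-2j}` for
`2 ≤ i ≤ g` (1-indexed). -/
noncomputable def Q1 (g : ℕ) : Matrix (Fin g) (Fin g) (MvPolynomial (Fin (2 * g)) ℂ) :=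
  Matrix.of fun i j =>
    if (i : ℕ) = 0 then Xvar g ((g : ℤ) - 2 * ((j : ℕ) : ℤ) - 2)
    else Xvar g ((g : ℤ) + ((i : ℕ) : ℤ) - 2 * ((j : ℕ) : ℤ))

/-- The matrix `Q_2`: first row `X_{g+1-2j}`, second row `X_{g+2-2j}`, and `(i,j)` entry
`X_{g+i+1-2j}` for `3 ≤ i ≤ g` (1-indexed). -/
noncomputable def Q2 (g : ℕ) : Matrix (Fin g) (Fin g) (MvPolynomial (Fin (2 * g)) ℂ) :=
  Matrix.of fun i j =>
    if (i : ℕ) = 0 then Xvar g ((g : ℤ) - 1 - 2 * ((j : ℕ) : ℤ))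
    else if (i : ℕ) = 1 then Xvar g ((g : ℤ) - 2 * ((j : ℕ) : ℤ))
    else Xvar g ((g : ℤ) + ((i : ℕ) : ℤ) - 2 * ((j : ℕ) : ℤ))

namespace Stmt11
open Matrix Polynomial

abbrev Rg (g : ℕ) := MvPolynomial (Fin (2 * g)) ℂ

lemma Xvar_neg {g : ℕ} {m : ℤ} (h : m < 0) : Xvar g m = 0 := by
  rw [Xvar, dif_neg]; omega

lemma Xvar_ge {g : ℕ} {m : ℤ} (h : 2 * (g:ℤ) ≤ m) : Xvar g m = 0 := by
  rw [Xvar, dif_neg]; omega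

/-- The big `(g+2) × (g+2)` matrix: first `g` columns encode the odd coefficients
`1, 3, …, 2g-1` of `f·T^k`, the last two columns are unit vectors `e_g, e_{g+1}`. -/
noncomputable def Nmat (g : ℕ) : Matrix (Fin (g+2)) (Fin (g+2)) (Rg g) :=
  Matrix.of fun k l =>
    if (l : ℕ) < g then Xvar g ((2 * (l:ℕ) + 1 : ℤ) - (k:ℕ)) else if k = l then 1 else 0

/-- `f = ∑ X_m T^m`. -/
noncomputable def fpoly (g : ℕ) : Polynomial (Rg g) :=
  ∑ m ∈ Finset.range (2*g), Polynomial.C (Xvar g m) * Polynomial.X ^ m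

lemma fpoly_coeff (g : ℕ) (t : ℕ) : (fpoly g).coeff t = Xvar g t := by
  rw [fpoly, finset_sum_coeff]
  simp only [coeff_C_mul, coeff_X_pow, mul_ite, mul_one, mul_zero]
  by_cases ht : t < 2*g
  · rw [Finset.sum_eq_single t (fun b _ hb => by simp [Ne.symm hb]) (by simp [Finset.mem_range, ht])]
    simp
  · rw [Finset.sum_eq_zero, eq_comm]
    · exact Xvar_ge (by omega)
    · intro b hb
      rw [if_neg]
      rintro rfl; exact ht (Finset.mem_range.mp hb)

/-- The polynomial whose coefficients are a row of the adjugate of `Nmat`. -/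
noncomputable def Cpoly (g : ℕ) (r : Fin (g+2)) : Polynomial (Rg g) :=
  ∑ k : Fin (g+2), Polynomial.C ((Nmat g).adjugate r k) * Polynomial.X ^ (k:ℕ)

lemma Cpoly_coeff (g : ℕ) (r : Fin (g+2)) (t : ℕ) (ht : t < g+2) :
    (Cpoly g r).coeff t = (Nmat g).adjugate r ⟨t, ht⟩ := by
  rw [Cpoly, finset_sum_coeff]
  simp only [coeff_C_mul, coeff_X_pow, mul_ite, mul_one, mul_zero]
  rw [Finset.sum_eq_single (⟨t, ht⟩ : Fin (g+2))]
  · simp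
  · intro b _ hb
    rw [if_neg]
    intro h; exact hb (by apply Fin.ext; simp only [Fin.val_mk]; omega)
  · simp

lemma Cpoly_coeff_ge (g : ℕ) (r : Fin (g+2)) (t : ℕ) (ht : g+2 ≤ t) :
    (Cpoly g r).coeff t = 0 := by
  rw [Cpoly, finset_sum_coeff]
  apply Finset.sum_eq_zero
  intro b _
  simp only [coeff_C_mul, coeff_X_pow, mul_ite, mul_one, mul_zero]
  rw [if_neg]
  have := b.isLt; omega

/-- Kernel property: for a row `r` of the adjugate with `g ≤ r`, the product
`f · C_r` has vanishing odd coefficients `2l+1` for `l < g`. -/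
lemma kernel_coeff (g : ℕ) (r : Fin (g+2)) (hr : g ≤ (r:ℕ)) (l : ℕ) (hl : l < g) :
    (fpoly g * Cpoly g r).coeff (2*l+1) = 0 := by
  have hlt : l < g + 2 := by omega
  rw [Cpoly, Finset.mul_sum, finset_sum_coeff]
  have key : ∀ k : Fin (g+2),
      (fpoly g * (Polynomial.C ((Nmat g).adjugate r k) * Polynomial.X ^ (k:ℕ))).coeff (2*l+1)
        = (Nmat g).adjugate r k * Nmat g k ⟨l, hlt⟩ := by
    intro k
    have : fpoly g * (Polynomial.C ((Nmat g).adjugate r k) * Polynomial.X ^ (k:ℕ))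
        = Polynomial.C ((Nmat g).adjugate r k) * (fpoly g * Polynomial.X ^ (k:ℕ)) := by ring
    rw [this, coeff_C_mul, coeff_mul_X_pow']
    congr 1
    have hN : Nmat g k ⟨l, hlt⟩ = Xvar g ((2 * (l:ℕ) + 1 : ℤ) - (k:ℕ)) := by
      rw [Nmat]; simp only [Matrix.of_apply]; rw [if_pos hl]
    rw [hN]
    by_cases hk : (k:ℕ) ≤ 2*l+1
    · rw [if_pos hk, fpoly_coeff]
      congr 1; omega
    · rw [if_neg hk, eq_comm]
      exact Xvar_neg (by omega)
  rw [Finset.sum_congr rfl (fun k _ => key k)]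
  have : ∑ k : Fin (g+2), (Nmat g).adjugate r k * Nmat g k ⟨l, hlt⟩
      = ((Nmat g).adjugate * Nmat g) r ⟨l, hlt⟩ := (Matrix.mul_apply).symm
  rw [this, Matrix.adjugate_mul]
  simp only [Matrix.smul_apply, Matrix.one_apply, smul_eq_mul]
  rw [if_neg, mul_zero]
  intro h
  have : (r:ℕ) = l := by rw [h]
  omega


lemma coeff_comp_neg {A : Type*} [CommRing A] (p : Polynomial A) (t : ℕ) :
    (p.comp (-Polynomial.X)).coeff t = (-1)^t * p.coeff t := by
  induction p using Polynomial.induction_on' with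
  | add p q hp hq => simp [add_comp, hp, hq, mul_add]
  | monomial n a =>
    have h1 : ((-X : Polynomial A))^n = C ((-1:A)^n) * X^n := by
      rw [neg_pow, C_pow, C_neg, C_1]
    rw [monomial_comp, h1, ← mul_assoc, mul_comm (C a) _, mul_assoc, coeff_C_mul, coeff_C_mul,
      coeff_X_pow]
    simp only [coeff_monomial]
    by_cases h : t = n
    · subst h; simp
    · simp [h, Ne.symm h]

lemma sum_range_four {A : Type*} [CommRing A] (g : ℕ) (hg : 2 ≤ g) (F : ℕ → A)
    (hbig : ∀ a, g+2 ≤ a → F a = 0) (hsmall : ∀ a, a < g-2 → F a = 0) :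
    ∑ a ∈ Finset.range (2*g), F a = F (g-2) + F (g-1) + F g + F (g+1) := by
  have hsub : ({g-2, g-1, g, g+1} : Finset ℕ) ⊆ Finset.range (2*g) := by
    intro x hx
    simp only [Finset.mem_insert, Finset.mem_singleton] at hx
    rw [Finset.mem_range]; omega
  rw [← Finset.sum_subset hsub]
  · rw [Finset.sum_insert (by simp only [Finset.mem_insert, Finset.mem_singleton]; push_neg; omega),
      Finset.sum_insert (by simp only [Finset.mem_insert, Finset.mem_singleton]; push_neg; omega),
      Finset.sum_insert (by simp only [Finset.mem_singleton]; omega), Finset.sum_singleton]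
    ring
  · intro x _ hx
    simp only [Finset.mem_insert, Finset.mem_singleton] at hx
    rcases (by omega : x < g - 2 ∨ g + 2 ≤ x) with h | h
    · exact hsmall x h
    · exact hbig x h

/-- first distinguished row index -/
def r1 (g : ℕ) : Fin (g+2) := ⟨g, by omega⟩
/-- second distinguished row index -/
def r2 (g : ℕ) : Fin (g+2) := ⟨g+1, by omega⟩

noncomputable def Vpoly (g : ℕ) : Polynomial (Rg g) :=
  Cpoly g (r1 g) * ((Cpoly g (r2 g)).comp (-Polynomial.X))
    - ((Cpoly g (r1 g)).comp (-Polynomial.X)) * Cpoly g (r2 g)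

lemma fV_coeff (g : ℕ) (t : ℕ) (ht : t ≤ 2*g) : (fpoly g * Vpoly g).coeff t = 0 := by
  have hid : fpoly g * Vpoly g =
      ((Cpoly g (r2 g)).comp (-X)) *
        (fpoly g * Cpoly g (r1 g) - (fpoly g * Cpoly g (r1 g)).comp (-X))
      - ((Cpoly g (r1 g)).comp (-X)) *
        (fpoly g * Cpoly g (r2 g) - (fpoly g * Cpoly g (r2 g)).comp (-X)) := by
    simp only [Vpoly, mul_comp]; ring
  have main : ∀ r : Fin (g+2), g ≤ (r:ℕ) → ∀ b : ℕ, b ≤ 2*g →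
      (fpoly g * Cpoly g r - (fpoly g * Cpoly g r).comp (-X)).coeff b = 0 := by
    intro r hr b hb
    rw [coeff_sub, coeff_comp_neg]
    rcases Nat.even_or_odd b with he | ho
    · rw [he.neg_one_pow, one_mul, sub_self]
    · obtain ⟨c, hc⟩ := ho
      have hlg : c < g := by omega
      rw [hc, kernel_coeff g r hr c hlg, mul_zero, sub_zero]
  rw [hid, coeff_sub, coeff_mul, coeff_mul]
  rw [Finset.sum_eq_zero, Finset.sum_eq_zero, sub_zero]
  · rintro ⟨a, b⟩ hmem
    rw [Finset.HasAntidiagonal.mem_antidiagonal] at hmem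
    rw [main (r2 g) (by simp [r2]) b (by omega), mul_zero]
  · rintro ⟨a, b⟩ hmem
    rw [Finset.HasAntidiagonal.mem_antidiagonal] at hmem
    rw [main (r1 g) (by simp [r1]) b (by omega), mul_zero]

lemma V_coeff_zero (g : ℕ) (hg : 2 ≤ g) : (Vpoly g).coeff (2*g-1) = 0 := by
  have h1 : (X:Polynomial (Rg g))^(2*g+1) ∣ fpoly g * Vpoly g :=
    X_pow_dvd_iff.mpr (fun d hd => fV_coeff g d (by omega))
  have h2 : ¬ ((X:Polynomial (Rg g)) ∣ fpoly g) := by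
    rw [X_dvd_iff, fpoly_coeff]
    rw [show ((0:ℕ):ℤ) = 0 by norm_num, Xvar, dif_pos (by constructor <;> omega)]
    exact MvPolynomial.X_ne_zero _
  have h3 : (X:Polynomial (Rg g))^(2*g+1) ∣ Vpoly g :=
    (Polynomial.prime_X).pow_dvd_of_dvd_mul_left _ h2 h1
  exact X_pow_dvd_iff.mp h3 (2*g-1) (by omega)

lemma star (g : ℕ) (hg : 2 ≤ g) :
    (Cpoly g (r1 g)).coeff (g-1) * (Cpoly g (r2 g)).coeff g
      - (Cpoly g (r1 g)).coeff g * (Cpoly g (r2 g)).coeff (g-1)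
    = (Cpoly g (r1 g)).coeff (g-2) * (Cpoly g (r2 g)).coeff (g+1)
      - (Cpoly g (r1 g)).coeff (g+1) * (Cpoly g (r2 g)).coeff (g-2) := by
  have hV := V_coeff_zero g hg
  set C1 := Cpoly g (r1 g) with hC1
  set C2 := Cpoly g (r2 g) with hC2
  rw [Vpoly, coeff_sub, coeff_mul, coeff_mul, ← Finset.sum_sub_distrib] at hV
  rw [Finset.sum_congr rfl (fun p _ => by
    rw [coeff_comp_neg, coeff_comp_neg] :
      ∀ p ∈ Finset.HasAntidiagonal.antidiagonal (2*g-1), _ = C1.coeff p.1 * ((-1)^p.2 * C2.coeff p.2)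
        - (-1)^p.1 * C1.coeff p.1 * C2.coeff p.2)] at hV
  rw [Finset.Nat.sum_antidiagonal_eq_sum_range_succ_mk] at hV
  rw [show (2*g-1).succ = 2*g by omega] at hV
  rw [sum_range_four g hg _ ?hbig ?hsmall] at hV
  case hbig =>
    intro a ha
    rw [Cpoly_coeff_ge g _ a ha]
    ring
  case hsmall =>
    intro a ha
    rw [Cpoly_coeff_ge g _ (2*g-1-a) (by omega)]
    ring
  rw [show 2*g-1-(g-2) = g+1 by omega, show 2*g-1-(g-1) = g by omega,
    show 2*g-1-g = g-1 by omega, show 2*g-1-(g+1) = g-2 by omega] at hV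
  set a1 := C1.coeff (g-2); set a2 := C1.coeff (g-1); set a3 := C1.coeff g
  set a4 := C1.coeff (g+1)
  set b1 := C2.coeff (g-2); set b2 := C2.coeff (g-1); set b3 := C2.coeff g
  set b4 := C2.coeff (g+1)
  set e := ((-1 : Rg g))^g with he
  have e1 : ((-1 : Rg g))^(g+1) = -e := by rw [pow_succ]; ring
  have e2 : ((-1 : Rg g))^(g-1) = -e := by
    have : ((-1 : Rg g))^(g-1) * (-1) = e := by rw [← pow_succ, show g-1+1 = g by omega]
    linear_combination -this
  have e3 : ((-1 : Rg g))^(g-2) = e := by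
    have : ((-1 : Rg g))^(g-2) * ((-1)^2) = e := by rw [← pow_add, show g-2+2 = g by omega]
    linear_combination this
  rw [e1, e2, e3] at hV
  have hee : e * e = 1 := by
    rw [he, ← pow_add, show g + g = 2*g by ring, pow_mul]
    norm_num
  have key : (2 : Rg g) * ((a2*b3 - a3*b2) - (a1*b4 - a4*b1)) = 0 := by
    linear_combination e * hV + (-2*(a2*b3 - a3*b2 - a1*b4 + a4*b1)) * hee
  have h2 : ((a2*b3 - a3*b2) - (a1*b4 - a4*b1)) = 0 := by
    rcases mul_eq_zero.mp key with h | h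
    · exact absurd h two_ne_zero
    · exact h
  linear_combination h2


section MatrixTools
variable {n : Type*} [DecidableEq n] [Fintype n] {A : Type*} [CommRing A]

lemma mul_updateColumn (M P : Matrix n n A) (j : n) (c : n → A) :
    M * (P.updateCol j c) = (M * P).updateCol j (M.mulVec c) := by
  ext i l
  by_cases h : l = j
  · subst h
    simp [Matrix.mul_apply, Matrix.updateCol_apply, Matrix.mulVec, dotProduct]
  · simp [Matrix.mul_apply, Matrix.updateCol_apply, h]

lemma updateColumn_comm (M : Matrix n n A) {j j' : n} (h : j ≠ j') (c c' : n → A) :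
    (M.updateCol j c).updateCol j' c' = (M.updateCol j' c').updateCol j c := by
  ext i l
  by_cases h1 : l = j' <;> by_cases h2 : l = j <;>
    simp_all [Matrix.updateCol_apply]

lemma det_blocks₂₁ {m o : Type*} [DecidableEq m] [Fintype m] [DecidableEq o] [Fintype o]
    (M : Matrix (m ⊕ o) (m ⊕ o) A) (h : M.toBlocks₂₁ = 0) :
    M.det = M.toBlocks₁₁.det * M.toBlocks₂₂.det := by
  conv_lhs => rw [← Matrix.fromBlocks_toBlocks M, h]
  rw [Matrix.det_fromBlocks_zero₂₁]

lemma det_blocks₁₂ {m o : Type*} [DecidableEq m] [Fintype m] [DecidableEq o] [Fintype o]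
    (M : Matrix (m ⊕ o) (m ⊕ o) A) (h : M.toBlocks₁₂ = 0) :
    M.det = M.toBlocks₁₁.det * M.toBlocks₂₂.det := by
  conv_lhs => rw [← Matrix.fromBlocks_toBlocks M, h]
  rw [Matrix.det_fromBlocks_zero₁₂]

end MatrixTools

/-- the index embedding `Fin g ⊕ Fin 2 → Fin (g+2)` in natural order -/
def τfun (g : ℕ) : Fin g ⊕ Fin 2 → Fin (g+2) :=
  Sum.elim (fun j => ⟨(j:ℕ), by have := j.isLt; omega⟩)
    (fun t => ⟨g + (t:ℕ), by have := t.isLt; omega⟩)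

noncomputable def τeq (g : ℕ) : (Fin g ⊕ Fin 2) ≃ Fin (g+2) :=
  Equiv.ofBijective (τfun g) (by
    rw [Fintype.bijective_iff_injective_and_card]
    refine ⟨?_, by simp⟩
    rintro (a | b) (c | d) h <;>
      simp only [τfun, Sum.elim_inl, Sum.elim_inr, Fin.mk.injEq] at h
    · exact congrArg Sum.inl (Fin.ext h)
    · exfalso; have := a.isLt; omega
    · exfalso; have := c.isLt; omega
    · exact congrArg Sum.inr (Fin.ext (by omega)))

variable (g : ℕ)

/-- `N` with columns `g, g+1` replaced by unit columns `e_{i1}, e_{i2}`. -/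
noncomputable def Lmat (i1 i2 : Fin (g+2)) : Matrix (Fin (g+2)) (Fin (g+2)) (Rg g) :=
  ((Nmat g).updateCol (r1 g) (fun j => (1 : Matrix (Fin (g+2)) (Fin (g+2)) (Rg g)) j i1)).updateCol
    (r2 g) (fun j => (1 : Matrix (Fin (g+2)) (Fin (g+2)) (Rg g)) j i2)

/-- identity with columns `g, g+1` replaced by adjugate columns `i1, i2`. -/
noncomputable def Bmat (i1 i2 : Fin (g+2)) : Matrix (Fin (g+2)) (Fin (g+2)) (Rg g) :=
  ((1 : Matrix (Fin (g+2)) (Fin (g+2)) (Rg g)).updateCol (r1 g)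
      (fun k => (Nmat g).adjugate k i1)).updateCol
    (r2 g) (fun k => (Nmat g).adjugate k i2)

lemma r1_ne_r2 : r1 g ≠ r2 g := by
  simp [r1, r2, Fin.ext_iff]

lemma τ_inl_ne_r1 (j : Fin g) : τeq g (Sum.inl j) ≠ r1 g := by
  simp only [τeq, Equiv.ofBijective_apply, τfun, Sum.elim_inl, r1, ne_eq, Fin.mk.injEq]
  have := j.isLt; omega

lemma τ_inl_ne_r2 (j : Fin g) : τeq g (Sum.inl j) ≠ r2 g := by
  simp only [τeq, Equiv.ofBijective_apply, τfun, Sum.elim_inr, Sum.elim_inl, r2, ne_eq,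
    Fin.mk.injEq]
  have := j.isLt; omega

lemma τ_inr_zero : τeq g (Sum.inr 0) = r1 g := by
  simp only [τeq, Equiv.ofBijective_apply, τfun, Sum.elim_inr, r1]
  exact Fin.ext (by simp)

lemma τ_inr_one : τeq g (Sum.inr 1) = r2 g := by
  simp only [τeq, Equiv.ofBijective_apply, τfun, Sum.elim_inr, r2]
  exact Fin.ext (by simp)

lemma det_Bmat (i1 i2 : Fin (g+2)) :
    (Bmat g i1 i2).det = (Nmat g).adjugate (r1 g) i1 * (Nmat g).adjugate (r2 g) i2
      - (Nmat g).adjugate (r1 g) i2 * (Nmat g).adjugate (r2 g) i1 := by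
  rw [← Matrix.det_submatrix_equiv_self (τeq g) (Bmat g i1 i2)]
  rw [det_blocks₂₁ _ ?hzero]
  case hzero =>
    refine Matrix.ext fun t j => ?_
    simp only [Matrix.toBlocks₂₁, Matrix.submatrix_apply, Matrix.of_apply, Matrix.zero_apply]
    rw [Bmat, Matrix.updateCol_apply, if_neg (τ_inl_ne_r2 g j),
      Matrix.updateCol_apply, if_neg (τ_inl_ne_r1 g j)]
    rw [Matrix.one_apply, if_neg]
    simp only [τeq, Equiv.ofBijective_apply, τfun, Sum.elim_inl, Sum.elim_inr, ne_eq,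
      Fin.mk.injEq]
    have := j.isLt; omega
  have h11 : ((Bmat g i1 i2).submatrix (τeq g) (τeq g)).toBlocks₁₁ = 1 := by
    refine Matrix.ext fun i j => ?_
    simp only [Matrix.toBlocks₁₁, Matrix.submatrix_apply, Matrix.of_apply]
    rw [Bmat, Matrix.updateCol_apply, if_neg (τ_inl_ne_r2 g j),
      Matrix.updateCol_apply, if_neg (τ_inl_ne_r1 g j)]
    by_cases h : i = j
    · subst h
      simp [Matrix.one_apply]
    · rw [Matrix.one_apply, if_neg (fun hc => h (Sum.inl.inj ((τeq g).injective hc))),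
        Matrix.one_apply, if_neg h]
  have hB : ∀ t s, ((Bmat g i1 i2).submatrix (τeq g) (τeq g)).toBlocks₂₂ t s
      = Bmat g i1 i2 (τeq g (Sum.inr t)) (τeq g (Sum.inr s)) := fun t s => rfl
  have e00 : ((Bmat g i1 i2).submatrix (τeq g) (τeq g)).toBlocks₂₂ 0 0
      = (Nmat g).adjugate (r1 g) i1 := by
    rw [hB, τ_inr_zero, Bmat, Matrix.updateCol_apply, if_neg (r1_ne_r2 g),
      Matrix.updateCol_apply, if_pos rfl]
  have e01 : ((Bmat g i1 i2).submatrix (τeq g) (τeq g)).toBlocks₂₂ 0 1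
      = (Nmat g).adjugate (r1 g) i2 := by
    rw [hB, τ_inr_zero, τ_inr_one, Bmat, Matrix.updateCol_apply, if_pos rfl]
  have e10 : ((Bmat g i1 i2).submatrix (τeq g) (τeq g)).toBlocks₂₂ 1 0
      = (Nmat g).adjugate (r2 g) i1 := by
    rw [hB, τ_inr_zero, τ_inr_one, Bmat, Matrix.updateCol_apply, if_neg (r1_ne_r2 g),
      Matrix.updateCol_apply, if_pos rfl]
  have e11 : ((Bmat g i1 i2).submatrix (τeq g) (τeq g)).toBlocks₂₂ 1 1
      = (Nmat g).adjugate (r2 g) i2 := by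
    rw [hB, τ_inr_one, Bmat, Matrix.updateCol_apply, if_pos rfl]
  rw [h11, Matrix.det_one, one_mul, Matrix.det_fin_two, e00, e01, e10, e11]

lemma mulVec_adj (i : Fin (g+2)) :
    (Nmat g).mulVec (fun k => (Nmat g).adjugate k i)
      = (Nmat g).det • (fun j => (1 : Matrix (Fin (g+2)) (Fin (g+2)) (Rg g)) j i) := by
  funext j
  have h1 : (Nmat g).mulVec (fun k => (Nmat g).adjugate k i) j
      = ((Nmat g) * (Nmat g).adjugate) j i := by
    rw [Matrix.mul_apply]
    rfl
  rw [h1, Matrix.mul_adjugate]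
  simp [Matrix.smul_apply]

lemma detN_mul_detB (i1 i2 : Fin (g+2)) :
    (Nmat g).det * (Bmat g i1 i2).det = (Nmat g).det * ((Nmat g).det * (Lmat g i1 i2).det) := by
  have hNB : Nmat g * Bmat g i1 i2 =
      ((Nmat g).updateCol (r1 g)
          ((Nmat g).det • fun j => (1 : Matrix (Fin (g+2)) (Fin (g+2)) (Rg g)) j i1)).updateCol
        (r2 g) ((Nmat g).det • fun j => (1 : Matrix (Fin (g+2)) (Fin (g+2)) (Rg g)) j i2) := by
    rw [Bmat, mul_updateColumn, mul_updateColumn, Matrix.mul_one, mulVec_adj, mulVec_adj]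
  have h1 : (Nmat g * Bmat g i1 i2).det = (Nmat g).det * (Bmat g i1 i2).det := Matrix.det_mul _ _
  rw [hNB] at h1
  rw [Matrix.det_updateCol_smul,
    updateColumn_comm _ (r1_ne_r2 g), Matrix.det_updateCol_smul,
    updateColumn_comm _ (Ne.symm (r1_ne_r2 g))] at h1
  rw [← h1, Lmat]

lemma det_L_eq (hg : 2 ≤ g) (hN : (Nmat g).det ≠ 0) :
    (Lmat g ⟨g-1, by omega⟩ ⟨g, by omega⟩).det = (Lmat g ⟨g-2, by omega⟩ ⟨g+1, by omega⟩).det := by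
  have hstar := star g hg
  rw [Cpoly_coeff g (r1 g) (g-1) (by omega), Cpoly_coeff g (r1 g) g (by omega),
    Cpoly_coeff g (r1 g) (g-2) (by omega), Cpoly_coeff g (r1 g) (g+1) (by omega),
    Cpoly_coeff g (r2 g) (g-1) (by omega), Cpoly_coeff g (r2 g) g (by omega),
    Cpoly_coeff g (r2 g) (g-2) (by omega), Cpoly_coeff g (r2 g) (g+1) (by omega)] at hstar
  have hB : (Bmat g ⟨g-1, by omega⟩ ⟨g, by omega⟩).det
      = (Bmat g ⟨g-2, by omega⟩ ⟨g+1, by omega⟩).det := by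
    rw [det_Bmat, det_Bmat]
    exact hstar
  have h1 := detN_mul_detB g ⟨g-1, by omega⟩ ⟨g, by omega⟩
  have h2 := detN_mul_detB g ⟨g-2, by omega⟩ ⟨g+1, by omega⟩
  rw [hB] at h1
  have := h1.symm.trans h2
  exact mul_left_cancel₀ hN (mul_left_cancel₀ hN this)

/-- specialization point: `X_0 = X_d = 1` (`d = 2⌊g/2⌋+1`), other variables `0`. -/
def vspec (g : ℕ) : Fin (2*g) → ℂ :=
  fun m => if (m:ℕ) = 0 ∨ (m:ℕ) = 2*(g/2)+1 then 1 else 0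

lemma eval_Xvar (hg : 2 ≤ g) (m : ℤ) :
    (MvPolynomial.eval (vspec g)) (Xvar g m)
      = if m = 0 ∨ m = ((2*(g/2)+1 : ℕ) : ℤ) then 1 else 0 := by
  rw [Xvar]
  split_ifs with h h2 h2
  · simp only [MvPolynomial.eval_X, vspec, Fin.val_mk]
    rw [if_pos]
    rcases h2 with h2 | h2 <;> [left; right] <;> omega
  · simp only [MvPolynomial.eval_X, vspec, Fin.val_mk]
    rw [if_neg]
    push_neg at h2 ⊢
    constructor <;> omega
  · exfalso
    rcases h2 with h2 | h2 <;> omega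
  · exact map_zero _

/-- the permutation underlying the specialized matrix -/
def πfun (g : ℕ) : Fin g → Fin g :=
  fun l => ⟨if 2*(l:ℕ)+1 < g then 2*(l:ℕ)+1 else 2*(l:ℕ)+1-(2*(g/2)+1),
    by have := l.isLt; split <;> omega⟩

lemma πfun_val (g : ℕ) (l : Fin g) :
    (πfun g l : ℕ) = if 2*(l:ℕ)+1 < g then 2*(l:ℕ)+1 else 2*(l:ℕ)+1-(2*(g/2)+1) := rfl

noncomputable def πeq (g : ℕ) (hg : 2 ≤ g) : Equiv.Perm (Fin g) :=
  Equiv.ofBijective (πfun g)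
    ((Finite.injective_iff_bijective).mp (by
      intro l l' h
      have h1 := congrArg (Fin.val) h
      rw [πfun_val, πfun_val] at h1
      have := l.isLt; have := l'.isLt
      apply Fin.ext
      split_ifs at h1 <;> omega))

lemma detN_ne_zero (hg : 2 ≤ g) : (Nmat g).det ≠ 0 := by
  set φ := MvPolynomial.eval (vspec g) with hφ
  have hmap : φ (Nmat g).det = (φ.mapMatrix (Nmat g)).det := RingHom.map_det φ (Nmat g)
  set N' := φ.mapMatrix (Nmat g) with hN'
  have hdet : N'.det = ((Equiv.Perm.sign (πeq g hg) : ℤ) : ℂ) := by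
    rw [← Matrix.det_submatrix_equiv_self (τeq g) N']
    rw [det_blocks₁₂ _ ?hzero]
    case hzero =>
      refine Matrix.ext fun k t => ?_
      simp only [Matrix.toBlocks₁₂, Matrix.submatrix_apply, Matrix.of_apply, Matrix.zero_apply,
        RingHom.mapMatrix_apply, Matrix.map_apply, hN']
      have h1 : Nmat g (τeq g (Sum.inl k)) (τeq g (Sum.inr t)) = 0 := by
        rw [Nmat]
        simp only [Matrix.of_apply, τeq, Equiv.ofBijective_apply, τfun, Sum.elim_inl,
          Sum.elim_inr]
        rw [if_neg (by have := t.isLt; omega), if_neg]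
        simp only [ne_eq, Fin.mk.injEq]
        have := k.isLt; omega
      rw [h1, map_zero]
    have h22 : (N'.submatrix (τeq g) (τeq g)).toBlocks₂₂ = 1 := by
      refine Matrix.ext fun t s => ?_
      simp only [Matrix.toBlocks₂₂, Matrix.submatrix_apply, Matrix.of_apply,
        RingHom.mapMatrix_apply, Matrix.map_apply, hN']
      have hNe : Nmat g (τeq g (Sum.inr t)) (τeq g (Sum.inr s))
          = if t = s then 1 else 0 := by
        rw [Nmat]
        simp only [Matrix.of_apply, τeq, Equiv.ofBijective_apply, τfun, Sum.elim_inr]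
        rw [if_neg (by have := s.isLt; omega)]
        by_cases hts : t = s
        · subst hts; simp
        · rw [if_neg hts, if_neg]
          intro hc
          apply hts
          apply Fin.ext
          have h3 := congrArg Fin.val hc
          simp only [Fin.val_mk] at h3
          omega
      rw [hNe]
      split_ifs with h
      · subst h; simp [Matrix.one_apply]
      · simp [Matrix.one_apply, h]
    have h11 : (N'.submatrix (τeq g) (τeq g)).toBlocks₁₁
        = (((1 : Matrix (Fin g) (Fin g) ℂ)).submatrix (πeq g hg) id)ᵀ := by
      refine Matrix.ext fun k l => ?_
      simp only [Matrix.toBlocks₁₁, Matrix.submatrix_apply, Matrix.of_apply,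
        RingHom.mapMatrix_apply, Matrix.map_apply, hN', Matrix.transpose_apply, id_eq]
      have hNe : Nmat g (τeq g (Sum.inl k)) (τeq g (Sum.inl l))
          = Xvar g ((2*(l:ℕ)+1 : ℤ) - (k:ℕ)) := by
        rw [Nmat]
        simp only [Matrix.of_apply, τeq, Equiv.ofBijective_apply, τfun, Sum.elim_inl]
        rw [if_pos l.isLt]
      rw [hNe, eval_Xvar g hg]
      have hcond : ((2*(l:ℕ)+1 : ℤ) - (k:ℕ) = 0 ∨ (2*(l:ℕ)+1 : ℤ) - (k:ℕ) = ((2*(g/2)+1 : ℕ) : ℤ))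
          ↔ (πeq g hg) l = k := by
        have hv : ((πeq g hg) l : ℕ) = if 2*(l:ℕ)+1 < g then 2*(l:ℕ)+1
            else 2*(l:ℕ)+1-(2*(g/2)+1) := πfun_val g l
        rw [Fin.ext_iff, hv]
        have := l.isLt; have := k.isLt
        split_ifs with hc
        · constructor <;> intro h <;> omega
        · constructor <;> intro h <;> omega
      rw [if_congr hcond rfl rfl, Matrix.one_apply]
      exact if_congr (by rw [id_eq]) rfl rfl
    rw [h11, h22, Matrix.det_one, mul_one, Matrix.det_transpose, Matrix.det_permute,
      Matrix.det_one, mul_one]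
  intro h0
  rw [h0, map_zero] at hmap
  have h1 : N'.det * N'.det = 1 := by
    rw [hdet, ← Int.cast_mul, ← Units.val_mul, Int.units_mul_self, Units.val_one, Int.cast_one]
  rw [← hmap] at h1
  simp at h1

/-- column equivalence: `inl j ↦ g-1-j`, `inr t ↦ g+t` -/
def σfun (g : ℕ) : Fin g ⊕ Fin 2 → Fin (g+2) :=
  Sum.elim (fun j => ⟨g-1-(j:ℕ), by omega⟩) (fun t => ⟨g + (t:ℕ), by have := t.isLt; omega⟩)

noncomputable def σeq (g : ℕ) (hg : 2 ≤ g) : (Fin g ⊕ Fin 2) ≃ Fin (g+2) :=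
  Equiv.ofBijective (σfun g) (by
    rw [Fintype.bijective_iff_injective_and_card]
    refine ⟨?_, by simp⟩
    rintro (a | a) (b | b) h <;>
      simp only [σfun, Sum.elim_inl, Sum.elim_inr, Fin.mk.injEq] at h
    · exact congrArg Sum.inl (Fin.ext (by have := a.isLt; have := b.isLt; omega))
    · exfalso; have := a.isLt; have := b.isLt; omega
    · exfalso; have := a.isLt; have := b.isLt; omega
    · exact congrArg Sum.inr (Fin.ext (by omega)))

/-- row equivalence for `Q1`: `inl 0 ↦ g+1`, `inl i ↦ g-1-i`, `inr t ↦ g-1+t` -/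
def ρ1fun (g : ℕ) : Fin g ⊕ Fin 2 → Fin (g+2) :=
  Sum.elim (fun i => if (i:ℕ) = 0 then ⟨g+1, by omega⟩ else ⟨g-1-(i:ℕ), by omega⟩)
    (fun t => ⟨g-1+(t:ℕ), by have := t.isLt; omega⟩)

noncomputable def ρ1eq (g : ℕ) (hg : 2 ≤ g) : (Fin g ⊕ Fin 2) ≃ Fin (g+2) :=
  Equiv.ofBijective (ρ1fun g) (by
    rw [Fintype.bijective_iff_injective_and_card]
    refine ⟨?_, by simp⟩
    rintro (a | a) (b | b) h <;>
      simp only [ρ1fun, Sum.elim_inl, Sum.elim_inr] at h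
    · split_ifs at h with h1 h2 <;> rw [Fin.mk.injEq] at h <;>
        exact congrArg Sum.inl (Fin.ext (by have := a.isLt; have := b.isLt; omega))
    · exfalso
      split_ifs at h with h1 <;> rw [Fin.mk.injEq] at h <;>
        (have := a.isLt; have := b.isLt; omega)
    · exfalso
      split_ifs at h with h1 <;> rw [Fin.mk.injEq] at h <;>
        (have := a.isLt; have := b.isLt; omega)
    · rw [Fin.mk.injEq] at h
      exact congrArg Sum.inr (Fin.ext (by have := a.isLt; have := b.isLt; omega)))

/-- row equivalence for `Q2`: `inl 0 ↦ g`, `inl 1 ↦ g-1`, `inl i ↦ g-1-i`,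
`inr 0 ↦ g-2`, `inr 1 ↦ g+1` -/
def ρ2fun (g : ℕ) : Fin g ⊕ Fin 2 → Fin (g+2) :=
  Sum.elim (fun i => if (i:ℕ) = 0 then ⟨g, by omega⟩ else if (i:ℕ) = 1 then ⟨g-1, by omega⟩
      else ⟨g-1-(i:ℕ), by omega⟩)
    (fun t => if (t:ℕ) = 0 then ⟨g-2, by omega⟩ else ⟨g+1, by omega⟩)

noncomputable def ρ2eq (g : ℕ) (hg : 2 ≤ g) : (Fin g ⊕ Fin 2) ≃ Fin (g+2) :=
  Equiv.ofBijective (ρ2fun g) (by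
    rw [Fintype.bijective_iff_injective_and_card]
    refine ⟨?_, by simp⟩
    rintro (a | a) (b | b) h <;>
      simp only [ρ2fun, Sum.elim_inl, Sum.elim_inr] at h
    · split_ifs at h <;> rw [Fin.mk.injEq] at h <;>
        exact congrArg Sum.inl (Fin.ext (by have := a.isLt; have := b.isLt; omega))
    · exfalso
      split_ifs at h <;> rw [Fin.mk.injEq] at h <;>
        (have := a.isLt; have := b.isLt; omega)
    · exfalso
      split_ifs at h <;> rw [Fin.mk.injEq] at h <;>
        (have := a.isLt; have := b.isLt; omega)
    · split_ifs at h <;> rw [Fin.mk.injEq] at h <;>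
        exact congrArg Sum.inr (Fin.ext (by have := a.isLt; have := b.isLt; omega)))

lemma σ_inl_ne_r1 (hg : 2 ≤ g) (j : Fin g) : σeq g hg (Sum.inl j) ≠ r1 g := by
  simp only [σeq, Equiv.ofBijective_apply, σfun, Sum.elim_inl, r1, ne_eq, Fin.mk.injEq]
  have := j.isLt; omega

lemma σ_inl_ne_r2 (hg : 2 ≤ g) (j : Fin g) : σeq g hg (Sum.inl j) ≠ r2 g := by
  simp only [σeq, Equiv.ofBijective_apply, σfun, Sum.elim_inl, r2, ne_eq, Fin.mk.injEq]
  have := j.isLt; omega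

lemma σ_inr_val0 (hg : 2 ≤ g) (t : Fin 2) (ht : (t:ℕ) = 0) :
    σeq g hg (Sum.inr t) = r1 g := by
  apply Fin.ext
  show g + (t:ℕ) = g
  omega

lemma σ_inr_val1 (hg : 2 ≤ g) (t : Fin 2) (ht : (t:ℕ) = 1) :
    σeq g hg (Sum.inr t) = r2 g := by
  apply Fin.ext
  show g + (t:ℕ) = g + 1
  omega

lemma one_apply_mk {n : ℕ} (a b : ℕ) (ha : a < n) (hb : b < n) {A : Type*} [CommRing A] :
    (1 : Matrix (Fin n) (Fin n) A) ⟨a, ha⟩ ⟨b, hb⟩ = if a = b then 1 else 0 := by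
  rw [Matrix.one_apply]
  exact if_congr (by rw [Fin.mk.injEq]) rfl rfl

lemma detL_eq_detQ1 (hg : 2 ≤ g) :
    ((Lmat g ⟨g-1, by omega⟩ ⟨g, by omega⟩).submatrix (ρ1eq g hg) (σeq g hg)).det
      = (Q1 g).det := by
  set L1 := Lmat g ⟨g-1, by omega⟩ ⟨g, by omega⟩ with hL1
  rw [det_blocks₁₂ _ ?hzero]
  case hzero =>
    refine Matrix.ext fun i t => ?_
    simp only [Matrix.toBlocks₁₂, Matrix.submatrix_apply, Matrix.of_apply, Matrix.zero_apply]
    have hrowv : (ρ1eq g hg (Sum.inl i) : ℕ) = if (i:ℕ) = 0 then g+1 else g-1-(i:ℕ) := by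
      simp only [ρ1eq, Equiv.ofBijective_apply, ρ1fun, Sum.elim_inl]
      split_ifs <;> rfl
    by_cases ht : (t:ℕ) = 0
    · rw [hL1, Lmat, σ_inr_val0 g hg t ht, Matrix.updateCol_apply, if_neg (r1_ne_r2 g),
        Matrix.updateCol_apply, if_pos rfl, Matrix.one_apply, if_neg]
      intro hc
      have := congrArg Fin.val hc
      rw [hrowv] at this
      simp only [Fin.val_mk] at this
      split_ifs at this <;> (have := i.isLt; omega)
    · have ht1 : (t:ℕ) = 1 := by have := t.isLt; omega
      rw [hL1, Lmat, σ_inr_val1 g hg t ht1, Matrix.updateCol_apply, if_pos rfl,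
        Matrix.one_apply, if_neg]
      intro hc
      have := congrArg Fin.val hc
      rw [hrowv] at this
      simp only [Fin.val_mk] at this
      split_ifs at this <;> (have := i.isLt; omega)
  have h22 : ((L1.submatrix (ρ1eq g hg) (σeq g hg)).toBlocks₂₂) = 1 := by
    refine Matrix.ext fun t s => ?_
    have hB : (L1.submatrix (ρ1eq g hg) (σeq g hg)).toBlocks₂₂ t s
        = L1 (ρ1eq g hg (Sum.inr t)) (σeq g hg (Sum.inr s)) := rfl
    have hrow : ρ1eq g hg (Sum.inr t) = (⟨g-1+(t:ℕ), by have := t.isLt; omega⟩ : Fin (g+2)) := rfl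
    rw [hB, hrow]
    by_cases hs : (s:ℕ) = 0
    · rw [σ_inr_val0 g hg s hs, hL1, Lmat, Matrix.updateCol_apply, if_neg (r1_ne_r2 g),
        Matrix.updateCol_apply, if_pos rfl, one_apply_mk, Matrix.one_apply]
      exact if_congr (by rw [Fin.ext_iff]; have := t.isLt; omega) rfl rfl
    · have hs1 : (s:ℕ) = 1 := by have := s.isLt; omega
      rw [σ_inr_val1 g hg s hs1, hL1, Lmat, Matrix.updateCol_apply, if_pos rfl,
        one_apply_mk, Matrix.one_apply]
      exact if_congr (by rw [Fin.ext_iff]; have := t.isLt; omega) rfl rfl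
  have h11 : ((L1.submatrix (ρ1eq g hg) (σeq g hg)).toBlocks₁₁) = Q1 g := by
    refine Matrix.ext fun i j => ?_
    have hB : (L1.submatrix (ρ1eq g hg) (σeq g hg)).toBlocks₁₁ i j
        = L1 (ρ1eq g hg (Sum.inl i)) (σeq g hg (Sum.inl j)) := rfl
    rw [hB, hL1, Lmat, Matrix.updateCol_apply, if_neg (σ_inl_ne_r2 g hg j),
      Matrix.updateCol_apply, if_neg (σ_inl_ne_r1 g hg j)]
    have hcol : σeq g hg (Sum.inl j) = (⟨g-1-(j:ℕ), by omega⟩ : Fin (g+2)) := rfl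
    rw [hcol, Nmat]
    simp only [Matrix.of_apply, Fin.val_mk]
    rw [if_pos (by have := j.isLt; omega)]
    rw [Q1]
    simp only [Matrix.of_apply]
    by_cases hi : (i:ℕ) = 0
    · rw [if_pos hi]
      have hrow : ρ1eq g hg (Sum.inl i) = (⟨g+1, by omega⟩ : Fin (g+2)) := by
        simp only [ρ1eq, Equiv.ofBijective_apply, ρ1fun, Sum.elim_inl, if_pos hi]
      rw [hrow]
      simp only [Fin.val_mk]
      congr 1
      have := j.isLt; omega
    · rw [if_neg hi]
      have hrow : ρ1eq g hg (Sum.inl i) = (⟨g-1-(i:ℕ), by omega⟩ : Fin (g+2)) := by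
        simp only [ρ1eq, Equiv.ofBijective_apply, ρ1fun, Sum.elim_inl, if_neg hi]
      rw [hrow]
      simp only [Fin.val_mk]
      congr 1
      have := j.isLt; have := i.isLt; omega
  rw [h11, h22, Matrix.det_one, mul_one]

lemma detL_eq_detQ2 (hg : 2 ≤ g) :
    ((Lmat g ⟨g-2, by omega⟩ ⟨g+1, by omega⟩).submatrix (ρ2eq g hg) (σeq g hg)).det
      = (Q2 g).det := by
  set L2 := Lmat g ⟨g-2, by omega⟩ ⟨g+1, by omega⟩ with hL2
  have hrowv : ∀ i : Fin g, (ρ2eq g hg (Sum.inl i) : ℕ)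
      = if (i:ℕ) = 0 then g else if (i:ℕ) = 1 then g-1 else g-1-(i:ℕ) := by
    intro i
    simp only [ρ2eq, Equiv.ofBijective_apply, ρ2fun, Sum.elim_inl]
    split_ifs <;> rfl
  rw [det_blocks₁₂ _ ?hzero]
  case hzero =>
    refine Matrix.ext fun i t => ?_
    simp only [Matrix.toBlocks₁₂, Matrix.submatrix_apply, Matrix.of_apply, Matrix.zero_apply]
    by_cases ht : (t:ℕ) = 0
    · rw [hL2, Lmat, σ_inr_val0 g hg t ht, Matrix.updateCol_apply, if_neg (r1_ne_r2 g),
        Matrix.updateCol_apply, if_pos rfl, Matrix.one_apply, if_neg]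
      intro hc
      have := congrArg Fin.val hc
      rw [hrowv] at this
      simp only [Fin.val_mk] at this
      split_ifs at this <;> (have := i.isLt; omega)
    · have ht1 : (t:ℕ) = 1 := by have := t.isLt; omega
      rw [hL2, Lmat, σ_inr_val1 g hg t ht1, Matrix.updateCol_apply, if_pos rfl,
        Matrix.one_apply, if_neg]
      intro hc
      have := congrArg Fin.val hc
      rw [hrowv] at this
      simp only [Fin.val_mk] at this
      split_ifs at this <;> (have := i.isLt; omega)
  have hrow0 : ∀ t : Fin 2, (t:ℕ) = 0 →
      ρ2eq g hg (Sum.inr t) = (⟨g-2, by omega⟩ : Fin (g+2)) := by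
    intro t ht
    simp only [ρ2eq, Equiv.ofBijective_apply, ρ2fun, Sum.elim_inr, if_pos ht]
  have hrow1 : ∀ t : Fin 2, (t:ℕ) = 1 →
      ρ2eq g hg (Sum.inr t) = (⟨g+1, by omega⟩ : Fin (g+2)) := by
    intro t ht
    simp only [ρ2eq, Equiv.ofBijective_apply, ρ2fun, Sum.elim_inr]
    rw [if_neg (by omega)]
  have h22 : ((L2.submatrix (ρ2eq g hg) (σeq g hg)).toBlocks₂₂) = 1 := by
    refine Matrix.ext fun t s => ?_
    have hB : (L2.submatrix (ρ2eq g hg) (σeq g hg)).toBlocks₂₂ t s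
        = L2 (ρ2eq g hg (Sum.inr t)) (σeq g hg (Sum.inr s)) := rfl
    rw [hB]
    by_cases hs : (s:ℕ) = 0
    · rw [σ_inr_val0 g hg s hs, hL2, Lmat, Matrix.updateCol_apply, if_neg (r1_ne_r2 g),
        Matrix.updateCol_apply, if_pos rfl]
      by_cases ht : (t:ℕ) = 0
      · rw [hrow0 t ht, one_apply_mk, Matrix.one_apply]
        exact if_congr (by rw [Fin.ext_iff]; omega) rfl rfl
      · have ht1 : (t:ℕ) = 1 := by have := t.isLt; omega
        rw [hrow1 t ht1, one_apply_mk, Matrix.one_apply]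
        exact if_congr (by rw [Fin.ext_iff]; omega) rfl rfl
    · have hs1 : (s:ℕ) = 1 := by have := s.isLt; omega
      rw [σ_inr_val1 g hg s hs1, hL2, Lmat, Matrix.updateCol_apply, if_pos rfl]
      by_cases ht : (t:ℕ) = 0
      · rw [hrow0 t ht, one_apply_mk, Matrix.one_apply]
        exact if_congr (by rw [Fin.ext_iff]; omega) rfl rfl
      · have ht1 : (t:ℕ) = 1 := by have := t.isLt; omega
        rw [hrow1 t ht1, one_apply_mk, Matrix.one_apply]
        exact if_congr (by rw [Fin.ext_iff]; omega) rfl rfl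
  have h11 : ((L2.submatrix (ρ2eq g hg) (σeq g hg)).toBlocks₁₁) = Q2 g := by
    refine Matrix.ext fun i j => ?_
    have hB : (L2.submatrix (ρ2eq g hg) (σeq g hg)).toBlocks₁₁ i j
        = L2 (ρ2eq g hg (Sum.inl i)) (σeq g hg (Sum.inl j)) := rfl
    rw [hB, hL2, Lmat, Matrix.updateCol_apply, if_neg (σ_inl_ne_r2 g hg j),
      Matrix.updateCol_apply, if_neg (σ_inl_ne_r1 g hg j)]
    have hcol : σeq g hg (Sum.inl j) = (⟨g-1-(j:ℕ), by omega⟩ : Fin (g+2)) := rfl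
    rw [hcol, Nmat]
    simp only [Matrix.of_apply, Fin.val_mk]
    rw [if_pos (by have := j.isLt; omega)]
    rw [Q2]
    simp only [Matrix.of_apply]
    by_cases hi : (i:ℕ) = 0
    · rw [if_pos hi]
      have hrow : ρ2eq g hg (Sum.inl i) = (⟨g, by omega⟩ : Fin (g+2)) := by
        simp only [ρ2eq, Equiv.ofBijective_apply, ρ2fun, Sum.elim_inl, if_pos hi]
      rw [hrow]
      simp only [Fin.val_mk]
      congr 1
      have := j.isLt; omega
    · rw [if_neg hi]
      by_cases hi1 : (i:ℕ) = 1
      · rw [if_pos hi1]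
        have hrow : ρ2eq g hg (Sum.inl i) = (⟨g-1, by omega⟩ : Fin (g+2)) := by
          simp only [ρ2eq, Equiv.ofBijective_apply, ρ2fun, Sum.elim_inl, if_neg hi, if_pos hi1]
        rw [hrow]
        simp only [Fin.val_mk]
        congr 1
        have := j.isLt; omega
      · rw [if_neg hi1]
        have hrow : ρ2eq g hg (Sum.inl i) = (⟨g-1-(i:ℕ), by omega⟩ : Fin (g+2)) := by
          simp only [ρ2eq, Equiv.ofBijective_apply, ρ2fun, Sum.elim_inl, if_neg hi, if_neg hi1]
        rw [hrow]
        simp only [Fin.val_mk]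
        congr 1
        have := j.isLt; have := i.isLt; omega
  rw [h11, h22, Matrix.det_one, mul_one]

lemma det_submatrix_sign (L : Matrix (Fin (g+2)) (Fin (g+2)) (Rg g))
    (ρ σ : (Fin g ⊕ Fin 2) ≃ Fin (g+2)) :
    (L.submatrix ρ σ).det = ((Equiv.Perm.sign (ρ.trans σ.symm) : ℤ) : Rg g) * L.det := by
  have h1 : L.submatrix ⇑ρ ⇑σ = (L.submatrix ⇑σ ⇑σ).submatrix ⇑(ρ.trans σ.symm) id := by
    refine Matrix.ext fun x y => ?_
    simp only [Matrix.submatrix_apply, id_eq, Equiv.trans_apply, Equiv.apply_symm_apply]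
  rw [h1, Matrix.det_permute, Matrix.det_submatrix_equiv_self]

/-- the permutation relating the two row equivalences: a product of two transpositions -/
noncomputable def qperm (hg : 2 ≤ g) : Equiv.Perm (Fin g ⊕ Fin 2) :=
  (Equiv.swap (Sum.inl (⟨0, by omega⟩ : Fin g)) (Sum.inr (1 : Fin 2))).trans
    (Equiv.swap (Sum.inl (⟨1, by omega⟩ : Fin g)) (Sum.inr (0 : Fin 2)))

lemma rho2_eq (hg : 2 ≤ g) : ρ2eq g hg = (qperm g hg).trans (ρ1eq g hg) := by
  have h0g : 0 < g := by omega
  have h1g : 1 < g := by omega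
  have hq : ∀ y, qperm g hg y = Equiv.swap (Sum.inl (⟨1, by omega⟩ : Fin g)) (Sum.inr (0 : Fin 2))
      (Equiv.swap (Sum.inl (⟨0, by omega⟩ : Fin g)) (Sum.inr (1 : Fin 2)) y) := fun y => rfl
  have ρ1v : ∀ i : Fin g, (ρ1eq g hg (Sum.inl i) : ℕ)
      = if (i:ℕ) = 0 then g+1 else g-1-(i:ℕ) := by
    intro i
    simp only [ρ1eq, Equiv.ofBijective_apply, ρ1fun, Sum.elim_inl]
    split_ifs <;> rfl
  have ρ1r : ∀ t : Fin 2, (ρ1eq g hg (Sum.inr t) : ℕ) = g-1+(t:ℕ) := fun t => rfl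
  have ρ2v : ∀ i : Fin g, (ρ2eq g hg (Sum.inl i) : ℕ)
      = if (i:ℕ) = 0 then g else if (i:ℕ) = 1 then g-1 else g-1-(i:ℕ) := by
    intro i
    simp only [ρ2eq, Equiv.ofBijective_apply, ρ2fun, Sum.elim_inl]
    split_ifs <;> rfl
  have ρ2r : ∀ t : Fin 2, (ρ2eq g hg (Sum.inr t) : ℕ)
      = if (t:ℕ) = 0 then g-2 else g+1 := by
    intro t
    simp only [ρ2eq, Equiv.ofBijective_apply, ρ2fun, Sum.elim_inr]
    split_ifs <;> rfl
  apply Equiv.ext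
  intro x
  rw [Equiv.trans_apply, hq]
  apply Fin.ext
  rcases x with i | t
  · by_cases hi : (i:ℕ) = 0
    · have hx : (Sum.inl i : Fin g ⊕ Fin 2) = Sum.inl (⟨0, by omega⟩ : Fin g) :=
        congrArg Sum.inl (Fin.ext hi)
      rw [hx, Equiv.swap_apply_left,
        Equiv.swap_apply_of_ne_of_ne (by simp) (by simp [Fin.ext_iff])]
      rw [ρ2v, ρ1r]
      simp only [Fin.val_mk, Fin.val_one]
      split_ifs <;> first | omega | (exact absurd ‹False› id) | (rename_i hF; exact absurd hF id) | simp_all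
    · by_cases hi1 : (i:ℕ) = 1
      · have hx : (Sum.inl i : Fin g ⊕ Fin 2) = Sum.inl (⟨1, by omega⟩ : Fin g) :=
          congrArg Sum.inl (Fin.ext hi1)
        rw [hx,
          Equiv.swap_apply_of_ne_of_ne (x := (Sum.inl (⟨1, by omega⟩ : Fin g) : Fin g ⊕ Fin 2))
            (by simp [Fin.ext_iff]) (by simp),
          Equiv.swap_apply_left]
        rw [ρ2v, ρ1r]
        simp only [Fin.val_mk, Fin.val_zero]
        split_ifs <;> first | omega | (exact absurd ‹False› id) | (rename_i hF; exact absurd hF id) | simp_all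
      · rw [Equiv.swap_apply_of_ne_of_ne (x := (Sum.inl i : Fin g ⊕ Fin 2))
            (by simp only [ne_eq, Sum.inl.injEq, Fin.ext_iff, Fin.val_mk]; omega)
            (by simp),
          Equiv.swap_apply_of_ne_of_ne (x := (Sum.inl i : Fin g ⊕ Fin 2))
            (by simp only [ne_eq, Sum.inl.injEq, Fin.ext_iff, Fin.val_mk]; omega)
            (by simp)]
        rw [ρ2v, ρ1v]
        split_ifs <;> first | omega | (exact absurd ‹False› id) | (rename_i hF; exact absurd hF id) | simp_all
  · by_cases ht : (t:ℕ) = 0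
    · have hx : (Sum.inr t : Fin g ⊕ Fin 2) = Sum.inr (0 : Fin 2) :=
        congrArg Sum.inr (Fin.ext ht)
      rw [hx,
        Equiv.swap_apply_of_ne_of_ne (x := (Sum.inr (0 : Fin 2) : Fin g ⊕ Fin 2))
          (by simp) (by simp [Fin.ext_iff]),
        Equiv.swap_apply_right]
      rw [ρ2r, ρ1v]
      simp only [Fin.val_mk, Fin.val_zero]
      split_ifs <;> first | omega | (exact absurd ‹False› id) | (rename_i hF; exact absurd hF id) | simp_all
    · have hx : (Sum.inr t : Fin g ⊕ Fin 2) = Sum.inr (1 : Fin 2) :=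
        congrArg Sum.inr (Fin.ext (by have := t.isLt; omega))
      rw [hx, Equiv.swap_apply_right,
        Equiv.swap_apply_of_ne_of_ne (x := (Sum.inl (⟨0, by omega⟩ : Fin g) : Fin g ⊕ Fin 2))
          (by simp [Fin.ext_iff]) (by simp)]
      rw [ρ2r, ρ1v]
      simp only [Fin.val_mk, Fin.val_one]
      split_ifs <;> first | omega | (exact absurd ‹False› id) | (rename_i hF; exact absurd hF id) | simp_all

lemma sign_qperm (hg : 2 ≤ g) : Equiv.Perm.sign (qperm g hg) = 1 := by
  have h1 : qperm g hg
      = (Equiv.swap (Sum.inl (⟨1, by omega⟩ : Fin g)) (Sum.inr (0 : Fin 2)))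
        * (Equiv.swap (Sum.inl (⟨0, by omega⟩ : Fin g)) (Sum.inr (1 : Fin 2))) := rfl
  rw [h1, Equiv.Perm.sign_mul, Equiv.Perm.sign_swap (by simp), Equiv.Perm.sign_swap (by simp)]
  norm_num

theorem main (hg : 2 ≤ g) : (Q1 g).det = (Q2 g).det := by
  have hN := detN_ne_zero g hg
  have hL := det_L_eq g hg hN
  have h1 := detL_eq_detQ1 g hg
  have h2 := detL_eq_detQ2 g hg
  rw [det_submatrix_sign] at h1 h2
  have hsgn : Equiv.Perm.sign ((ρ2eq g hg).trans (σeq g hg).symm)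
      = Equiv.Perm.sign ((ρ1eq g hg).trans (σeq g hg).symm) := by
    rw [rho2_eq g hg, Equiv.trans_assoc]
    have : (qperm g hg).trans ((ρ1eq g hg).trans (σeq g hg).symm)
        = ((ρ1eq g hg).trans (σeq g hg).symm) * (qperm g hg) := rfl
    rw [this, Equiv.Perm.sign_mul, sign_qperm g hg, mul_one]
  rw [← h1, ← h2, hL, hsgn]

end Stmt11

theorem stmt_11 (g : ℕ) (hg : 2 ≤ g) : (Q1 g).det = (Q2 g).det := by
  exact Stmt11.main g hg
end
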